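/- For any initial data (Aⁱⁿ, uⁱⁿ, pⁱⁿ, bⁱⁿ) ∈ ℝ⁴₊ there exists a unique nonnegative bounded solution (A,u,p,b) ∈ C¹ᵦ(ℝ₊)⁴, defined for all t > 0, of the ODE system A' = αuⁿ − μA, u' = λᵤ − γᵤu − τup + σb − αnuⁿ − ρuA, p' = λₚ − γₚp − τup + σb, b' = τup − (σ+δ)b, and the solution remains in the set S = {(A,u,p,b) ∈ ℝ⁴₊ : nA + u + p + 2b ≤ nAⁱⁿ + uⁱⁿ + pⁱⁿ + 2bⁱⁿ + λ/m} where λ = λᵤ + λₚ and m = min{μ, γᵤ, γₚ, δ}. -/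

import Mathlib

open Set Metric

namespace OdeWP

noncomputable section

abbrev E4 := ℝ × ℝ × ℝ × ℝ

/-- clamp to [0,M] -/
def clamp (M c : ℝ) : ℝ := max 0 (min c M)

lemma clamp_nonneg (M c : ℝ) : 0 ≤ clamp M c := le_max_left _ _

lemma clamp_le {M : ℝ} (hM : 0 ≤ M) (c : ℝ) : clamp M c ≤ M :=
  max_le hM (min_le_right _ _)

lemma clamp_eq {M c : ℝ} (h0 : 0 ≤ c) (hM : c ≤ M) : clamp M c = c := by
  simp [clamp, min_eq_left hM, max_eq_right h0]

lemma clamp_of_nonpos {M c : ℝ} (hM : 0 ≤ M) (h : c ≤ 0) : clamp M c = 0 := by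
  simp [clamp, max_eq_left, min_le_iff]
  exact Or.inl h

lemma lipschitzWith_clamp (M : ℝ) : LipschitzWith 1 (clamp M) := by
  exact (LipschitzWith.id.min_const M).const_max 0

def Fv (lamu lamp gu gp tau sig del rho mu alpha : ℝ) (n : ℕ) (x : E4) : E4 :=
  (alpha * x.2.1 ^ n - mu * x.1,
   lamu - gu * x.2.1 - tau * x.2.1 * x.2.2.1 + sig * x.2.2.2
     - alpha * n * x.2.1 ^ n - rho * x.2.1 * x.1,
   lamp - gp * x.2.2.1 - tau * x.2.1 * x.2.2.1 + sig * x.2.2.2,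
   tau * x.2.1 * x.2.2.1 - (sig + del) * x.2.2.2)

def clamp4 (M : ℝ) (x : E4) : E4 :=
  (clamp M x.1, clamp M x.2.1, clamp M x.2.2.1, clamp M x.2.2.2)

def Gv (lamu lamp gu gp tau sig del rho mu alpha : ℝ) (n : ℕ) (M : ℝ) (x : E4) : E4 :=
  Fv lamu lamp gu gp tau sig del rho mu alpha n (clamp4 M x)

lemma contDiff_Fv (lamu lamp gu gp tau sig del rho mu alpha : ℝ) (n : ℕ) :
    ContDiff ℝ 1 (Fv lamu lamp gu gp tau sig del rho mu alpha n) := by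
  unfold Fv
  fun_prop

lemma lipschitzWith_clamp4 (M : ℝ) : LipschitzWith 1 (clamp4 M) := by
  have h := lipschitzWith_clamp M
  have h1 : LipschitzWith 1 (fun x : E4 => clamp M x.1) := by simpa [Function.comp_def] using h.comp LipschitzWith.prod_fst
  have h2 : LipschitzWith 1 (fun x : E4 => clamp M x.2.1) :=
    by simpa [Function.comp_def] using h.comp (LipschitzWith.prod_fst.comp LipschitzWith.prod_snd)
  have h3 : LipschitzWith 1 (fun x : E4 => clamp M x.2.2.1) :=
    by simpa [Function.comp_def] using h.comp (LipschitzWith.prod_fst.comp (LipschitzWith.prod_snd.comp LipschitzWith.prod_snd))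
  have h4 : LipschitzWith 1 (fun x : E4 => clamp M x.2.2.2) :=
    by simpa [Function.comp_def] using h.comp (LipschitzWith.prod_snd.comp (LipschitzWith.prod_snd.comp LipschitzWith.prod_snd))
  have := h1.prodMk (h2.prodMk (h3.prodMk h4))
  exact (by simpa [clamp4, max_self] using this :
    LipschitzWith 1 fun x : E4 => (clamp M x.1, clamp M x.2.1, clamp M x.2.2.1, clamp M x.2.2.2))

/-- A C¹ map is Lipschitz on any convex compact set. -/
lemma contDiff_lipschitzOnWith {E F : Type*} [NormedAddCommGroup E] [NormedSpace ℝ E]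
    [NormedAddCommGroup F] [NormedSpace ℝ F] {f : E → F} (hf : ContDiff ℝ 1 f)
    {s : Set E} (hs : Convex ℝ s) (hc : IsCompact s) :
    ∃ K : NNReal, LipschitzOnWith K f s := by
  have hcont : ContinuousOn (fun x => ‖fderiv ℝ f x‖) s :=
    ((hf.continuous_fderiv one_ne_zero).norm).continuousOn
  obtain ⟨C, hC⟩ := hc.exists_bound_of_continuousOn hcont
  refine ⟨⟨max C 0, le_max_right _ _⟩, ?_⟩
  apply Convex.lipschitzOnWith_of_nnnorm_fderiv_le (fun x _ => (hf.differentiable one_ne_zero).differentiableAt)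
    (fun x hx => ?_) hs
  have := hC x hx
  rw [Real.norm_eq_abs, abs_of_nonneg (norm_nonneg _)] at this
  exact_mod_cast le_trans this (le_max_left _ _)

end

end OdeWP

namespace OdeWP2
open OdeWP

/-- derivative of first component -/
lemma HasDerivAt.fst' {α β : Type*} [NormedAddCommGroup α] [NormedSpace ℝ α]
    [NormedAddCommGroup β] [NormedSpace ℝ β] {f : ℝ → α × β} {v : α × β} {t : ℝ}
    (h : HasDerivAt f v t) : HasDerivAt (fun s => (f s).1) v.1 t := by
  have := ((ContinuousLinearMap.fst ℝ α β).hasFDerivAt (x := f t)).comp t h.hasFDerivAt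
  simpa [Function.comp_def] using this.hasDerivAt

lemma HasDerivAt.snd' {α β : Type*} [NormedAddCommGroup α] [NormedSpace ℝ α]
    [NormedAddCommGroup β] [NormedSpace ℝ β] {f : ℝ → α × β} {v : α × β} {t : ℝ}
    (h : HasDerivAt f v t) : HasDerivAt (fun s => (f s).2) v.2 t := by
  have := ((ContinuousLinearMap.snd ℝ α β).hasFDerivAt (x := f t)).comp t h.hasFDerivAt
  simpa [Function.comp_def] using this.hasDerivAt

/-- no escape below zero -/
lemma nonneg_of_deriv {f f' : ℝ → ℝ} (hf : ∀ t, 0 ≤ t → HasDerivAt f (f' t) t)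
    (h0 : 0 ≤ f 0) (hpos : ∀ t, 0 ≤ t → f t ≤ 0 → 0 ≤ f' t) : ∀ t, 0 ≤ t → 0 ≤ f t := by
  intro t1 ht1
  by_contra hneg
  push_neg at hneg
  have hcont : ContinuousOn f (Icc 0 t1) := fun s hs => (hf s hs.1).continuousAt.continuousWithinAt
  set S : Set ℝ := Icc 0 t1 ∩ f ⁻¹' (Ici 0) with hSdef
  have hS0 : (0 : ℝ) ∈ S := ⟨⟨le_rfl, ht1⟩, h0⟩
  have hSne : S.Nonempty := ⟨0, hS0⟩
  have hbdd : BddAbove S := ⟨t1, fun r hr => hr.1.2⟩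
  have hSclosed : IsClosed S :=
    hcont.preimage_isClosed_of_isClosed isClosed_Icc isClosed_Ici
  set s := sSup S with hs
  have hsS : s ∈ S := hSclosed.csSup_mem hSne hbdd
  have hs0 : 0 ≤ s := hsS.1.1
  have hst : s ≤ t1 := hsS.1.2
  have hfs : (0:ℝ) ≤ f s := hsS.2
  have hslt : s < t1 := lt_of_le_of_ne hst (fun h => by rw [h] at hfs; linarith)
  have hneg' : ∀ r, s < r → r ≤ t1 → f r < 0 := by
    intro r h1 h2
    by_contra h
    push_neg at h
    have hrS : r ∈ S := ⟨⟨le_trans hs0 h1.le, h2⟩, h⟩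
    exact absurd (le_csSup hbdd hrS) (not_le.mpr h1)
  have hmono : MonotoneOn f (Icc s t1) := by
    apply monotoneOn_of_deriv_nonneg (convex_Icc s t1)
      (hcont.mono (Icc_subset_Icc hs0 le_rfl))
    · intro r hr
      rw [interior_Icc] at hr
      exact (hf r (le_trans hs0 hr.1.le)).differentiableAt.differentiableWithinAt
    · intro r hr
      rw [interior_Icc] at hr
      rw [(hf r (hs0.trans hr.1.le)).deriv]
      exact hpos r (hs0.trans hr.1.le) (hneg' r hr.1 hr.2.le).le
  have hle : f s ≤ f t1 := hmono ⟨le_rfl, hslt.le⟩ ⟨hslt.le, le_rfl⟩ hslt.le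
  linarith

lemma le_of_deriv {f f' : ℝ → ℝ} {B : ℝ} (hf : ∀ t, 0 ≤ t → HasDerivAt f (f' t) t)
    (h0 : f 0 ≤ B) (hneg : ∀ t, 0 ≤ t → B ≤ f t → f' t ≤ 0) : ∀ t, 0 ≤ t → f t ≤ B := by
  have h := nonneg_of_deriv (f := fun t => B - f t) (f' := fun t => -f' t)
    (fun t ht => ((hf t ht).const_sub B)) (by simpa using h0)
    (fun t ht hle => by
      have h1 : B - f t ≤ 0 := hle
      simpa using hneg t ht (by linarith))
  intro t ht
  have := h t ht
  simpa using this

/-- Global flow for a bounded globally Lipschitz autonomous vector field. -/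
lemma global_flow {E : Type*} [NormedAddCommGroup E] [NormedSpace ℝ E] [CompleteSpace E]
    {v : E → E} {L : NNReal} {C : ℝ} (hv : LipschitzWith L v) (hb : ∀ x, ‖v x‖ ≤ C)
    (x₀ : E) : ∃ f : ℝ → E, f 0 = x₀ ∧ ∀ t, HasDerivAt f (v (f t)) t := by
  have hC : 0 ≤ C := le_trans (norm_nonneg _) (hb x₀)
  have key : ∀ T : ℕ, ∃ f : ℝ → E, f 0 = x₀ ∧
      ∀ t ∈ Ioo (-(T+1:ℝ)) (T+1), HasDerivAt f (v (f t)) t := by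
    intro T
    have hT1 : (0:ℝ) < T + 1 := by positivity
    have hpl : IsPicardLindelof (fun _ => v) (tmin := -(T+1:ℝ)) (tmax := T+1)
        ⟨0, by constructor <;> linarith⟩ x₀ ⟨C*(T+1), by positivity⟩ 0 ⟨C, hC⟩ L :=
      { lipschitzOnWith := fun t _ => hv.lipschitzOnWith
        continuousOn := fun x _ => continuousOn_const
        norm_le := fun t _ x _ => hb x
        mul_max_le := by
          simp [sub_zero, zero_sub, neg_neg, max_self]
          exact le_rfl }
    obtain ⟨f, hf0, hf⟩ := hpl.exists_eq_forall_mem_Icc_hasDerivWithinAt₀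
    exact ⟨f, hf0, fun t ht => (hf t (Ioo_subset_Icc_self ht)).hasDerivAt (Icc_mem_nhds ht.1 ht.2)⟩
  choose sols h0 hd using key
  have agree : ∀ m k : ℕ, ∀ t : ℝ, |t| ≤ m → |t| ≤ k → sols m t = sols k t := by
    intro m k t hm hk
    rcases eq_or_lt_of_le (abs_nonneg t) with h | h
    · have ht0 : t = 0 := abs_eq_zero.mp h.symm
      rw [ht0, h0 m, h0 k]
    · set c := |t| with hc
      have hmem : t ∈ Icc (-c) c := ⟨neg_abs_le t, le_abs_self t⟩
      have hsub : ∀ (j : ℕ), c ≤ j → Icc (-c) c ⊆ Ioo (-(j+1:ℝ)) (j+1) := by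
        intro j hj r hr
        exact ⟨by cases hr; linarith, by cases hr; linarith⟩
      have hder : ∀ (j : ℕ), c ≤ (j:ℝ) → ∀ r ∈ Ioo (-c) c, HasDerivAt (sols j) (v (sols j r)) r :=
        fun j hj r hr => hd j r (hsub j hj (Ioo_subset_Icc_self hr))
      have hcont : ∀ (j : ℕ), c ≤ (j:ℝ) → ContinuousOn (sols j) (Icc (-c) c) :=
        fun j hj r hr => (hd j r (hsub j hj hr)).continuousAt.continuousWithinAt
      have := ODE_solution_unique_of_mem_Icc (v := fun _ => v) (s := fun _ => univ)
        (K := L) (fun _ _ => hv.lipschitzOnWith.mono (subset_univ _))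
        (t₀ := 0) ⟨by linarith, h⟩ (hcont m hm) (hder m hm) (fun _ _ => trivial)
        (hcont k hk) (hder k hk) (fun _ _ => trivial) (by rw [h0 m, h0 k])
      exact this hmem
  refine ⟨fun t => sols (⌈|t|⌉₊ + 1) t, by simp [h0], ?_⟩
  intro t
  set N := ⌈|t|⌉₊ + 1 with hN
  have hNt : |t| + 1 ≤ N := by
    have := Nat.le_ceil |t|
    push_cast [hN]
    linarith
  have heq : (fun s => sols (⌈|s|⌉₊ + 1) s) =ᶠ[nhds t] sols N := by
    filter_upwards [Metric.ball_mem_nhds t one_pos] with r hr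
    have hrt : |r - t| < 1 := by simpa [Real.dist_eq] using hr
    have h1 : |r| ≤ (⌈|r|⌉₊ + 1 : ℕ) := by
      have := Nat.le_ceil |r|
      push_cast
      linarith
    have h2 : |r| ≤ (N : ℝ) := by
      have : |r| ≤ |t| + 1 := by
        have := abs_sub_abs_le_abs_sub r t
        linarith
      linarith
    exact agree _ N r h1 h2
  have hdN : HasDerivAt (sols N) (v (sols N t)) t := by
    apply hd N t
    constructor
    · push_cast
      linarith [Nat.le_ceil |t|, neg_abs_le t]
    · push_cast
      linarith [Nat.le_ceil |t|, le_abs_self t]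
  have := hdN.congr_of_eventuallyEq heq
  simpa using this

end OdeWP2

namespace OdeWP
open OdeWP2

lemma clamp_eq_of_ge {M c : ℝ} (hM : 0 ≤ M) (h : M ≤ c) : clamp M c = M := by
  simp [clamp, min_eq_right h, max_eq_right hM]

lemma clamp4_mem {M : ℝ} (hM : 0 ≤ M) (x : E4) : clamp4 M x ∈ closedBall (0 : E4) M := by
  rw [mem_closedBall_zero_iff]
  have h : ∀ c, ‖clamp M c‖ ≤ M := fun c => by
    rw [Real.norm_eq_abs, abs_of_nonneg (clamp_nonneg M c)]
    exact clamp_le hM c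
  simp only [clamp4, Prod.norm_def]
  exact max_le (h _) (max_le (h _) (max_le (h _) (h _)))

section Main
variable (lamu lamp gu gp tau sig del rho mu alpha : ℝ) (n : ℕ) (M : ℝ) (x : E4)

lemma Gv_1 : (Gv lamu lamp gu gp tau sig del rho mu alpha n M x).1
    = alpha * (clamp M x.2.1) ^ n - mu * clamp M x.1 := rfl

lemma Gv_2 : (Gv lamu lamp gu gp tau sig del rho mu alpha n M x).2.1
    = lamu - gu * clamp M x.2.1 - tau * clamp M x.2.1 * clamp M x.2.2.1
      + sig * clamp M x.2.2.2 - alpha * n * (clamp M x.2.1) ^ n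
      - rho * clamp M x.2.1 * clamp M x.1 := rfl

lemma Gv_3 : (Gv lamu lamp gu gp tau sig del rho mu alpha n M x).2.2.1
    = lamp - gp * clamp M x.2.2.1 - tau * clamp M x.2.1 * clamp M x.2.2.1
      + sig * clamp M x.2.2.2 := rfl

lemma Gv_4 : (Gv lamu lamp gu gp tau sig del rho mu alpha n M x).2.2.2
    = tau * clamp M x.2.1 * clamp M x.2.2.1 - (sig + del) * clamp M x.2.2.2 := rfl

end Main

end OdeWP


open OdeWP OdeWP2



/-- Global well-posedness of the Alzheimer ODE system: for any nonnegative
initial data there is a solution, unique on `[0,∞)`, which is nonnegative and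
stays in the stable set `S`. -/
theorem ode_well_posedness
    (lamu lamp gu gp tau sig del rho mu alpha : ℝ)
    (hlamu : 0 < lamu) (hlamp : 0 < lamp) (hgu : 0 < gu) (hgp : 0 < gp)
    (htau : 0 < tau) (hsig : 0 < sig) (hdel : 0 < del) (hrho : 0 < rho)
    (hmu : 0 < mu) (halpha : 0 < alpha)
    (n : ℕ) (hn : 1 ≤ n)
    (Ain uin pin bin : ℝ) (hAin : 0 ≤ Ain) (huin : 0 ≤ uin) (hpin : 0 ≤ pin)
    (hbin : 0 ≤ bin) :
    ∃ A u p b : ℝ → ℝ,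
      (A 0 = Ain ∧ u 0 = uin ∧ p 0 = pin ∧ b 0 = bin) ∧
      (∀ t, 0 ≤ t →
        HasDerivAt A (alpha * u t ^ n - mu * A t) t ∧
        HasDerivAt u (lamu - gu * u t - tau * u t * p t + sig * b t
          - alpha * n * u t ^ n - rho * u t * A t) t ∧
        HasDerivAt p (lamp - gp * p t - tau * u t * p t + sig * b t) t ∧
        HasDerivAt b (tau * u t * p t - (sig + del) * b t) t) ∧
      (∀ t, 0 ≤ t →
        (0 ≤ A t ∧ 0 ≤ u t ∧ 0 ≤ p t ∧ 0 ≤ b t) ∧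
        n * A t + u t + p t + 2 * b t ≤
          n * Ain + uin + pin + 2 * bin + (lamu + lamp) / min (min (min mu gu) gp) del) ∧
      (∀ A' u' p' b' : ℝ → ℝ,
        (A' 0 = Ain ∧ u' 0 = uin ∧ p' 0 = pin ∧ b' 0 = bin) →
        (∀ t, 0 ≤ t →
          HasDerivAt A' (alpha * u' t ^ n - mu * A' t) t ∧
          HasDerivAt u' (lamu - gu * u' t - tau * u' t * p' t + sig * b' t
            - alpha * n * u' t ^ n - rho * u' t * A' t) t ∧
          HasDerivAt p' (lamp - gp * p' t - tau * u' t * p' t + sig * b' t) t ∧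
          HasDerivAt b' (tau * u' t * p' t - (sig + del) * b' t) t) →
        ∀ t, 0 ≤ t → A' t = A t ∧ u' t = u t ∧ p' t = p t ∧ b' t = b t) := by
  -- constants
  set m : ℝ := min (min (min mu gu) gp) del with hmdef
  have hm : 0 < m := lt_min (lt_min (lt_min hmu hgu) hgp) hdel
  have hmmu : m ≤ mu := le_trans (min_le_left _ _) (le_trans (min_le_left _ _) (min_le_left _ _))
  have hmgu : m ≤ gu := le_trans (min_le_left _ _) (le_trans (min_le_left _ _) (min_le_right _ _))
  have hmgp : m ≤ gp := le_trans (min_le_left _ _) (min_le_right _ _)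
  have hmdel : m ≤ del := min_le_right _ _
  set lam : ℝ := lamu + lamp with hlamdef
  have hlam : 0 < lam := by positivity
  set B : ℝ := n * Ain + uin + pin + 2 * bin + lam / m with hBdef
  have hlamB : lam / m ≤ B := by
    have : (0:ℝ) ≤ (n:ℝ) * Ain := by positivity
    simp only [hBdef]; linarith
  have hB0 : 0 ≤ B := le_trans (by positivity) hlamB
  set M : ℝ := B + 1 with hMdef
  have hM0 : 0 ≤ M := by linarith
  have hBM : B < M := by linarith
  have hlamM : lam / m < M := lt_of_le_of_lt hlamB hBM
  set F : E4 → E4 := Fv lamu lamp gu gp tau sig del rho mu alpha n with hFdef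
  set G : E4 → E4 := Gv lamu lamp gu gp tau sig del rho mu alpha n M with hGdef
  -- G is globally Lipschitz and bounded
  obtain ⟨L, hL⟩ := contDiff_lipschitzOnWith (contDiff_Fv lamu lamp gu gp tau sig del rho mu alpha n)
    (convex_closedBall (0:E4) M) (isCompact_closedBall (0:E4) M)
  have hGlip : LipschitzWith (L * 1) G := by
    rw [← lipschitzOnWith_univ]
    have := hL.comp ((lipschitzWith_clamp4 M).lipschitzOnWith (s := univ))
      (fun x _ => clamp4_mem hM0 x)
    exact this
  obtain ⟨C, hC⟩ := (isCompact_closedBall (0:E4) M).exists_bound_of_continuousOn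
    ((contDiff_Fv lamu lamp gu gp tau sig del rho mu alpha n).continuous.continuousOn)
  have hGb : ∀ z, ‖G z‖ ≤ C := fun z => hC _ (clamp4_mem hM0 z)
  obtain ⟨x, hx0, hxd⟩ := global_flow hGlip hGb (Ain, uin, pin, bin)
  set A : ℝ → ℝ := fun t => (x t).1 with hA
  set u : ℝ → ℝ := fun t => (x t).2.1 with hu
  set p : ℝ → ℝ := fun t => (x t).2.2.1 with hp
  set b : ℝ → ℝ := fun t => (x t).2.2.2 with hb
  have hA0 : A 0 = Ain := by rw [hA]; simp [hx0]
  have hu0 : u 0 = uin := by rw [hu]; simp [hx0]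
  have hp0 : p 0 = pin := by rw [hp]; simp [hx0]
  have hb0 : b 0 = bin := by rw [hb]; simp [hx0]
  have hdA : ∀ t, HasDerivAt A ((G (x t)).1) t := fun t => OdeWP2.HasDerivAt.fst' (hxd t)
  have hdu : ∀ t, HasDerivAt u ((G (x t)).2.1) t := fun t =>
    OdeWP2.HasDerivAt.fst' (OdeWP2.HasDerivAt.snd' (hxd t))
  have hdp : ∀ t, HasDerivAt p ((G (x t)).2.2.1) t := fun t =>
    OdeWP2.HasDerivAt.fst' (OdeWP2.HasDerivAt.snd' (OdeWP2.HasDerivAt.snd' (hxd t)))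
  have hdb : ∀ t, HasDerivAt b ((G (x t)).2.2.2) t := fun t =>
    OdeWP2.HasDerivAt.snd' (OdeWP2.HasDerivAt.snd' (OdeWP2.HasDerivAt.snd' (hxd t)))
  have hG1 : ∀ t, (G (x t)).1 = alpha * (clamp M (u t)) ^ n - mu * clamp M (A t) := fun t => rfl
  have hG2 : ∀ t, (G (x t)).2.1 = lamu - gu * clamp M (u t)
      - tau * clamp M (u t) * clamp M (p t) + sig * clamp M (b t)
      - alpha * n * (clamp M (u t)) ^ n - rho * clamp M (u t) * clamp M (A t) := fun t => rfl
  have hG3 : ∀ t, (G (x t)).2.2.1 = lamp - gp * clamp M (p t)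
      - tau * clamp M (u t) * clamp M (p t) + sig * clamp M (b t) := fun t => rfl
  have hG4 : ∀ t, (G (x t)).2.2.2 = tau * clamp M (u t) * clamp M (p t)
      - (sig + del) * clamp M (b t) := fun t => rfl
  have hn0 : n ≠ 0 := by omega
  -- nonnegativity
  have hAnn : ∀ t, 0 ≤ t → 0 ≤ A t := by
    apply nonneg_of_deriv (fun t _ => hdA t) (hA0 ▸ hAin)
    intro t ht hle
    rw [hG1 t, clamp_of_nonpos hM0 hle]
    have : (0:ℝ) ≤ alpha * (clamp M (u t)) ^ n :=
      mul_nonneg halpha.le (pow_nonneg (clamp_nonneg _ _) n)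
    linarith
  have hunn : ∀ t, 0 ≤ t → 0 ≤ u t := by
    apply nonneg_of_deriv (fun t _ => hdu t) (hu0 ▸ huin)
    intro t ht hle
    rw [hG2 t, clamp_of_nonpos hM0 hle, zero_pow hn0]
    have : (0:ℝ) ≤ sig * clamp M (b t) := mul_nonneg hsig.le (clamp_nonneg _ _)
    linarith
  have hpnn : ∀ t, 0 ≤ t → 0 ≤ p t := by
    apply nonneg_of_deriv (fun t _ => hdp t) (hp0 ▸ hpin)
    intro t ht hle
    rw [hG3 t, clamp_of_nonpos hM0 hle]
    have : (0:ℝ) ≤ sig * clamp M (b t) := mul_nonneg hsig.le (clamp_nonneg _ _)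
    linarith
  have hbnn : ∀ t, 0 ≤ t → 0 ≤ b t := by
    apply nonneg_of_deriv (fun t _ => hdb t) (hb0 ▸ hbin)
    intro t ht hle
    rw [hG4 t, clamp_of_nonpos hM0 hle]
    have : (0:ℝ) ≤ tau * clamp M (u t) * clamp M (p t) :=
      mul_nonneg (mul_nonneg htau.le (clamp_nonneg _ _)) (clamp_nonneg _ _)
    linarith
  -- the linear functional bound
  set V : ℝ → ℝ := fun t => n * A t + u t + p t + 2 * b t with hV
  have hdV : ∀ t, HasDerivAt V
      ((n:ℝ) * (G (x t)).1 + (G (x t)).2.1 + (G (x t)).2.2.1 + 2 * (G (x t)).2.2.2) t := by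
    intro t
    exact ((((hdA t).const_mul (n:ℝ)).add (hdu t)).add (hdp t)).add ((hdb t).const_mul 2)
  have hVle : ∀ t, 0 ≤ t → V t ≤ B := by
    apply le_of_deriv (fun t _ => hdV t)
    · rw [hV]; simp only [hA0, hu0, hp0, hb0]
      have : 0 ≤ lam / m := by positivity
      simp only [hBdef]; linarith
    · intro t ht hBV
      set cA := clamp M (A t) with hcA
      set cu := clamp M (u t) with hcu
      set cp := clamp M (p t) with hcp
      set cb := clamp M (b t) with hcb
      have hcA0 : 0 ≤ cA := clamp_nonneg _ _
      have hcu0 : 0 ≤ cu := clamp_nonneg _ _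
      have hcp0 : 0 ≤ cp := clamp_nonneg _ _
      have hcb0 : 0 ≤ cb := clamp_nonneg _ _
      have hexp : (n:ℝ) * (G (x t)).1 + (G (x t)).2.1 + (G (x t)).2.2.1 + 2 * (G (x t)).2.2.2
          = lam - (n:ℝ) * mu * cA - gu * cu - gp * cp - 2 * del * cb - rho * cu * cA := by
        rw [hG1 t, hG2 t, hG3 t, hG4 t, ← hcA, ← hcu, ← hcp, ← hcb, hlamdef]
        ring
      rw [hexp]
      have hkey : lam ≤ m * ((n:ℝ) * cA + cu + cp + 2 * cb) := by
        by_cases hcase : A t ≤ M ∧ u t ≤ M ∧ p t ≤ M ∧ b t ≤ M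
        · obtain ⟨c1, c2, c3, c4⟩ := hcase
          have e1 : cA = A t := clamp_eq (hAnn t ht) c1
          have e2 : cu = u t := clamp_eq (hunn t ht) c2
          have e3 : cp = p t := clamp_eq (hpnn t ht) c3
          have e4 : cb = b t := clamp_eq (hbnn t ht) c4
          have hsum : lam / m ≤ (n:ℝ) * cA + cu + cp + 2 * cb := by
            rw [e1, e2, e3, e4]
            calc lam / m ≤ B := hlamB
            _ ≤ V t := hBV
            _ = _ := by rw [hV]
          exact (div_le_iff₀' hm).mp hsum
        · push_neg at hcase
          have hMsum : M ≤ (n:ℝ) * cA + cu + cp + 2 * cb := by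
            have hn1 : (1:ℝ) ≤ (n:ℝ) := by exact_mod_cast hn
            have hnA : (0:ℝ) ≤ (n:ℝ) * cA := mul_nonneg (Nat.cast_nonneg n) hcA0
            by_cases h1 : A t ≤ M
            · by_cases h2 : u t ≤ M
              · by_cases h3 : p t ≤ M
                · have h4 := hcase h1 h2 h3
                  have hb4 : cb = M := clamp_eq_of_ge hM0 h4.le
                  linarith [hb4 ▸ hcb0]
                · push_neg at h3
                  have hb4 : cp = M := clamp_eq_of_ge hM0 h3.le
                  linarith
              · push_neg at h2
                have hb4 : cu = M := clamp_eq_of_ge hM0 h2.le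
                linarith
            · push_neg at h1
              have hb4 : cA = M := clamp_eq_of_ge hM0 h1.le
              have h5 : M ≤ (n:ℝ) * cA := by rw [hb4]; exact le_mul_of_one_le_left hM0 hn1
              linarith
          have h6 : lam / m ≤ (n:ℝ) * cA + cu + cp + 2 * cb := le_trans hlamM.le hMsum
          exact (div_le_iff₀' hm).mp h6
      have e1 : m * ((n:ℝ) * cA) ≤ mu * ((n:ℝ) * cA) :=
        mul_le_mul_of_nonneg_right hmmu (by positivity)
      have e2 : m * cu ≤ gu * cu := mul_le_mul_of_nonneg_right hmgu hcu0
      have e3 : m * cp ≤ gp * cp := mul_le_mul_of_nonneg_right hmgp hcp0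
      have e4 : m * cb ≤ del * cb := mul_le_mul_of_nonneg_right hmdel hcb0
      have e5 : 0 ≤ rho * cu * cA := by positivity
      linarith
  -- componentwise bounds, clamps are identities along trajectory
  have hcomp : ∀ t, 0 ≤ t → A t ≤ M ∧ u t ≤ M ∧ p t ≤ M ∧ b t ≤ M := by
    intro t ht
    have hVt : (n:ℝ) * A t + u t + p t + 2 * b t ≤ B := hVle t ht
    have h1 := hAnn t ht; have h2 := hunn t ht; have h3 := hpnn t ht; have h4 := hbnn t ht
    have hn1 : (1:ℝ) ≤ (n:ℝ) := by exact_mod_cast hn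
    have hnA : (0:ℝ) ≤ (n:ℝ) * A t := mul_nonneg (Nat.cast_nonneg n) h1
    have hAn : A t ≤ (n:ℝ) * A t := le_mul_of_one_le_left h1 hn1
    exact ⟨by linarith, by linarith, by linarith, by linarith⟩
  have hclampid : ∀ t, 0 ≤ t → clamp4 M (x t) = x t := by
    intro t ht
    obtain ⟨c1, c2, c3, c4⟩ := hcomp t ht
    show (clamp M (x t).1, clamp M (x t).2.1, clamp M (x t).2.2.1, clamp M (x t).2.2.2) = x t
    rw [clamp_eq (hAnn t ht) c1, clamp_eq (hunn t ht) c2, clamp_eq (hpnn t ht) c3,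
      clamp_eq (hbnn t ht) c4]
  have hGF : ∀ t, 0 ≤ t → G (x t) = F (x t) := by
    intro t ht
    rw [hGdef, hFdef]
    show Fv lamu lamp gu gp tau sig del rho mu alpha n (clamp4 M (x t)) = _
    rw [hclampid t ht]
  have hxdF : ∀ t, 0 ≤ t → HasDerivAt x (F (x t)) t := fun t ht => (hGF t ht) ▸ hxd t
  refine ⟨A, u, p, b, ⟨hA0, hu0, hp0, hb0⟩, ?_, ?_, ?_⟩
  · -- derivatives
    intro t ht
    obtain ⟨c1, c2, c3, c4⟩ := hcomp t ht
    have e1 : clamp M (A t) = A t := clamp_eq (hAnn t ht) c1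
    have e2 : clamp M (u t) = u t := clamp_eq (hunn t ht) c2
    have e3 : clamp M (p t) = p t := clamp_eq (hpnn t ht) c3
    have e4 : clamp M (b t) = b t := clamp_eq (hbnn t ht) c4
    refine ⟨?_, ?_, ?_, ?_⟩
    · have := hdA t; rwa [hG1 t, e1, e2] at this
    · have := hdu t; rwa [hG2 t, e1, e2, e3, e4] at this
    · have := hdp t; rwa [hG3 t, e2, e3, e4] at this
    · have := hdb t; rwa [hG4 t, e2, e3, e4] at this
  · -- membership
    intro t ht
    refine ⟨⟨hAnn t ht, hunn t ht, hpnn t ht, hbnn t ht⟩, ?_⟩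
    have := hVle t ht
    rw [hV] at this
    rw [hBdef, hlamdef, hmdef] at this
    exact this
  · -- uniqueness
    intro A' u' p' b' hIC hDER t1 ht1
    set y : ℝ → E4 := fun t => (A' t, u' t, p' t, b' t) with hy
    have hyd : ∀ t, 0 ≤ t → HasDerivAt y (F (y t)) t := by
      intro t ht
      obtain ⟨h1, h2, h3, h4⟩ := hDER t ht
      exact h1.prodMk (h2.prodMk (h3.prodMk h4))
    have hycont : ContinuousOn y (Icc 0 t1) :=
      fun s hs => (hyd s hs.1).continuousAt.continuousWithinAt
    have hxcont : ContinuousOn x (Icc 0 t1) :=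
      fun s hs => (hxd s).continuousAt.continuousWithinAt
    have hKcomp : IsCompact ((x '' Icc 0 t1) ∪ (y '' Icc 0 t1)) :=
      ((isCompact_Icc.image_of_continuousOn hxcont).union
        (isCompact_Icc.image_of_continuousOn hycont))
    obtain ⟨R, hR⟩ := hKcomp.isBounded.subset_closedBall 0
    obtain ⟨L', hL'⟩ := contDiff_lipschitzOnWith
      (contDiff_Fv lamu lamp gu gp tau sig del rho mu alpha n)
      (convex_closedBall (0:E4) R) (isCompact_closedBall (0:E4) R)
    have heq : EqOn y x (Icc 0 t1) := by
      apply ODE_solution_unique_of_mem_Icc_right (v := fun _ => F)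
        (s := fun _ => closedBall (0:E4) R) (fun _ _ => hL') hycont
        (fun s hs => (hyd s hs.1).hasDerivWithinAt)
        (fun s hs => hR (Or.inr (mem_image_of_mem y (Ico_subset_Icc_self hs))))
        hxcont
        (fun s hs => (hxdF s hs.1).hasDerivWithinAt)
        (fun s hs => hR (Or.inl (mem_image_of_mem x (Ico_subset_Icc_self hs))))
        ?_
      rw [hy, hx0]
      simp [hIC.1, hIC.2.1, hIC.2.2.1, hIC.2.2.2]
    have h := heq ⟨ht1, le_rfl⟩
    exact ⟨congrArg Prod.fst h, congrArg (fun z => z.2.1) h,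
      congrArg (fun z => z.2.2.1) h, congrArg (fun z => z.2.2.2) h⟩
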